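/- Let y : ℝ^N → ℝ^N be continuously differentiable with y(0) = 0, let J denote its Jacobian matrix at 0, and let w_1,…,w_N be positive reals. If x^T diag(w_1,…,w_N) J x < 0 for every nonzero x ∈ ℝ^N, then there exists ε > 0 such that Σ_{i=1}^{N} w_i p_i y_i(p) < 0 for every p ∈ ℝ^N with 0 < ‖p‖ < ε. -/

import Mathlib

/-- Key estimate for the extinction-of-cooperation proposition: if `y : ℝ^N → ℝ^N` is
continuously differentiable with `y 0 = 0`, `J` is its Jacobian at `0`, and the weighted
quadratic form `x ↦ xᵀ diag(w) J x` (with positive weights `w i`) is negative definite, then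
`∑ i, w i * p i * y p i < 0` for all `p` in a punctured neighborhood of the origin. -/
theorem weighted_form_negative_near_origin
    (N : ℕ) (y : (Fin N → ℝ) → Fin N → ℝ)
    (hy : ContDiff ℝ 1 y) (hy0 : y 0 = 0)
    (w : Fin N → ℝ) (hw : ∀ i, 0 < w i)
    (hneg : ∀ x : Fin N → ℝ, x ≠ 0 → ∑ i : Fin N, w i * x i * fderiv ℝ y 0 x i < 0) :
    ∃ ε > (0 : ℝ), ∀ p : Fin N → ℝ, 0 < ‖p‖ → ‖p‖ < ε →
      ∑ i : Fin N, w i * p i * y p i < 0 := by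
  rcases Nat.eq_zero_or_pos N with hN | hN
  · refine ⟨1, one_pos, fun p hp _ => absurd hp ?_⟩
    subst hN
    have : p = 0 := Subsingleton.elim p 0
    simp [this]
  haveI : Nonempty (Fin N) := ⟨⟨0, hN⟩⟩
  set f := fderiv ℝ y 0 with hf
  set Q : (Fin N → ℝ) → ℝ := fun x => ∑ i, w i * x i * f x i with hQ
  have hQcont : Continuous Q := by
    apply continuous_finset_sum
    intro i _
    exact (continuous_const.mul (continuous_apply i)).mul
      ((continuous_apply i).comp f.continuous)
  -- max on the unit sphere
  obtain ⟨x0, hx0⟩ := exists_norm_eq (Fin N → ℝ) (zero_le_one)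
  have hsne : (Metric.sphere (0 : Fin N → ℝ) 1).Nonempty := ⟨x0, by simpa using hx0⟩
  obtain ⟨xm, hxm, hmax⟩ := (isCompact_sphere (0 : Fin N → ℝ) 1).exists_isMaxOn hsne
    hQcont.continuousOn
  have hxmnorm : ‖xm‖ = 1 := by simpa using hxm
  have hxmne : xm ≠ 0 := by
    intro h; rw [h, norm_zero] at hxmnorm; norm_num at hxmnorm
  set c : ℝ := -Q xm with hc
  have hcpos : 0 < c := by
    have := hneg xm hxmne
    simp only [hc, hQ]; linarith
  -- homogeneity: Q p ≤ -c * ‖p‖^2 for all p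
  have hQbound : ∀ p : Fin N → ℝ, Q p ≤ -c * ‖p‖ ^ 2 := by
    intro p
    rcases eq_or_ne p 0 with rfl | hp
    · simp [hQ]
    · have hnp : (0:ℝ) < ‖p‖ := norm_pos_iff.mpr hp
      set u : Fin N → ℝ := ‖p‖⁻¹ • p with hu
      have hunorm : u ∈ Metric.sphere (0 : Fin N → ℝ) 1 := by
        simp [hu, norm_smul, abs_of_pos (inv_pos.mpr hnp), inv_mul_cancel₀ hnp.ne']
      have hQu : Q u ≤ Q xm := hmax hunorm
      have hQp : Q p = ‖p‖ ^ 2 * Q u := by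
        simp only [hQ, hu, Finset.mul_sum]
        refine Finset.sum_congr rfl fun i _ => ?_
        have : f (‖p‖⁻¹ • p) = ‖p‖⁻¹ • f p := f.map_smul _ _
        rw [this]
        simp only [Pi.smul_apply, smul_eq_mul]
        field_simp
      rw [hQp]
      have : ‖p‖ ^ 2 * Q u ≤ ‖p‖ ^ 2 * (-c) := by
        apply mul_le_mul_of_nonneg_left _ (by positivity)
        simpa [hc] using hQu
      linarith
  -- little-o estimate
  have hder : HasFDerivAt y f 0 := (hy.differentiable one_ne_zero 0).hasFDerivAt
  have hlo := hasFDerivAt_iff_isLittleO_nhds_zero.mp hder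
  set W : ℝ := ∑ i, w i with hW
  have hWpos : 0 < W := Finset.sum_pos (fun i _ => hw i) Finset.univ_nonempty
  have hδ : 0 < c / (2 * W) := by positivity
  have := (hlo.def hδ).self_of_nhds
  obtain ⟨ε, hε, hball⟩ := Metric.eventually_nhds_iff.mp (hlo.def hδ)
  refine ⟨ε, hε, fun p hp hpε => ?_⟩
  have hdist : dist p (0 : Fin N → ℝ) < ε := by simpa [dist_zero_right] using hpε
  have hrem : ‖y (0 + p) - y 0 - f p‖ ≤ c / (2 * W) * ‖p‖ := hball hdist
  rw [zero_add, hy0, sub_zero] at hrem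
  -- combine
  have key : ∑ i, w i * p i * y p i = Q p + ∑ i, w i * p i * (y p i - f p i) := by
    rw [hQ, ← Finset.sum_add_distrib]
    exact Finset.sum_congr rfl fun i _ => by ring
  rw [key]
  have hbound2 : ∑ i, w i * p i * (y p i - f p i) ≤ W * (‖p‖ * (c / (2 * W) * ‖p‖)) := by
    rw [hW, Finset.sum_mul]
    apply Finset.sum_le_sum
    intro i _
    have h1 : w i * p i * (y p i - f p i) ≤ w i * |p i * (y p i - f p i)| := by
      rw [mul_assoc]
      exact mul_le_mul_of_nonneg_left (le_abs_self _) (hw i).le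
    refine h1.trans ?_
    rw [abs_mul]
    have h2 : |p i| ≤ ‖p‖ := by simpa using norm_le_pi_norm p i
    have h3 : |y p i - f p i| ≤ c / (2 * W) * ‖p‖ := by
      calc |y p i - f p i| ≤ ‖y p - f p‖ := by
            simpa using norm_le_pi_norm (y p - f p) i
        _ ≤ c / (2 * W) * ‖p‖ := hrem
    calc w i * (|p i| * |y p i - f p i|)
        ≤ w i * (‖p‖ * (c / (2 * W) * ‖p‖)) := by
          apply mul_le_mul_of_nonneg_left _ (hw i).le
          exact mul_le_mul h2 h3 (abs_nonneg _) (norm_nonneg _)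
      _ = w i * (‖p‖ * (c / (2 * W) * ‖p‖)) := rfl
  have hQp := hQbound p
  have hWeq : W * (‖p‖ * (c / (2 * W) * ‖p‖)) = c / 2 * ‖p‖ ^ 2 := by
    field_simp
  rw [hWeq] at hbound2
  have : (0:ℝ) < ‖p‖ ^ 2 := by positivity
  nlinarith
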